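/- Let M ≥ 1 and 1 ≤ C ≤ M. The number of ranking-compatible functions f : {1,…,M} → {1,…,M} having exactly C fixed points equals the number of permutations of {1,…,M} having exactly C cycles (fixed points of the permutation counted as cycles), i.e., the unsigned Stirling number of the first kind [M С]. Since every cycle of a ranking-compatible map is a loop, the number of fixed points equals the number of communities, so the probability distribution of the number of communities C of a uniformly random ranking-compatible map is P(C,M) = [M C]/M!. -/

import Mathlib

open Equiv Equiv.Perm Finset

variable {α : Type*} [Fintype α] [DecidableEq α]

lemma pow_ne_of_lt_card {σ : Perm α} {b : α} (hb : σ b ≠ b) {k : ℕ}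
    (h0 : 0 < k) (hk : k < (σ.cycleOf b).support.card) : (σ ^ k) b ≠ b := by
  intro h
  have := (zpow_eq_zpow_on_iff σ (m := (k : ℤ)) (n := 0) hb).mp (by
    simpa [zpow_natCast] using h)
  rw [Int.zero_emod] at this
  have hk' : (k : ℤ) % ((σ.cycleOf b).support.card : ℤ) = k :=
    Int.emod_eq_of_lt (by positivity) (by exact_mod_cast hk)
  rw [hk'] at this
  exact h0.ne' (by exact_mod_cast this)

lemma keyCycle {σ : Perm α} {a b : α} (hab : a ≠ b) (ha : σ a = a) (hb : σ b ≠ b) :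
    IsCycle (swap a b * σ.cycleOf b) := by
  set c := σ.cycleOf b with hc
  have hca : c a = a := by
    rw [hc, cycleOf_apply]; split <;> simp [ha]
  have hpow_a : ∀ k : ℕ, (σ ^ k) a = a := fun k => pow_apply_eq_self_of_apply_eq_self ha k
  have hne_a : ∀ k : ℕ, (σ ^ k) b ≠ a := by
    intro k h
    exact hab.symm ((σ ^ k).injective (h.trans (hpow_a k).symm))
  set d := swap a b * c with hd
  have hda : d a = b := by simp [hd, hca]
  have hstep : ∀ k : ℕ, k < c.support.card → (d ^ (k + 1)) a = (σ ^ k) b := by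
    intro k
    induction k with
    | zero => intro _; simpa using hda
    | succ k ih =>
      intro hk1
      have hk : k < c.support.card := Nat.lt_of_succ_lt hk1
      rw [pow_succ', mul_apply, ih hk]
      have h1 : c ((σ ^ k) b) = (σ ^ (k + 1)) b := by
        rw [hc]; exact cycleOf_apply_apply_pow_self σ b k
      rw [mul_apply, h1]
      exact swap_apply_of_ne_of_ne (hne_a (k + 1)) (pow_ne_of_lt_card hb k.succ_pos hk1)
  have hcb : c b ≠ b := by rw [hc, cycleOf_apply_self]; exact hb
  refine ⟨a, by rw [hda]; exact hab.symm, fun y hy => ?_⟩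
  rcases eq_or_ne y a with h | hya
  · subst h; exact SameCycle.refl _ _
  have hyc : c y ≠ y := by
    intro h
    rcases eq_or_ne y b with rfl | hyb
    · exact hcb h
    · apply hy
      rw [hd, mul_apply, h, swap_apply_of_ne_of_ne hya hyb]
  have hsc : σ.SameCycle b y := by
    have := mem_support_cycleOf_iff.mp (mem_support.mpr hyc)
    exact this.1
  obtain ⟨i, hi, hiy⟩ := hsc.exists_pow_eq_of_mem_support (mem_support.mpr hb)
  exact ⟨((i + 1 : ℕ) : ℤ), by rw [zpow_natCast, hstep i hi]; exact hiy⟩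

lemma cardTfac (σ : Perm α) : Multiset.card σ.cycleType = σ.cycleFactorsFinset.card := by
  rw [cycleType_def, Multiset.card_map]; rfl

lemma fixfilter (σ : Perm α) {a b : α} (hab : a ≠ b) (ha : σ a = a) :
    (univ.filter fun x => (swap a b * σ) x = x)
      = (univ.filter fun x => σ x = x) \ {a, b} := by
  ext x
  simp only [mem_filter, mem_univ, true_and, mem_sdiff, mem_insert, mem_singleton, mul_apply]
  constructor
  · intro h
    have h' : σ x = swap a b x := by
      have := congrArg (swap a b) h
      rwa [swap_apply_self] at this
    rcases eq_or_ne x a with rfl | hxa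
    · rw [swap_apply_left, ha] at h'; exact absurd h' hab
    rcases eq_or_ne x b with rfl | hxb
    · rw [swap_apply_right] at h'
      exact absurd (σ.injective (h'.trans ha.symm)) hab.symm
    · rw [swap_apply_of_ne_of_ne hxa hxb] at h'
      exact ⟨h', by tauto⟩
  · rintro ⟨h1, h2⟩
    push_neg at h2
    rw [h1, swap_apply_of_ne_of_ne h2.1 h2.2]

lemma cyc_swap_mul (σ : Perm α) {a b : α} (hab : a ≠ b) (ha : σ a = a) :
    Multiset.card (swap a b * σ).cycleType
        + (univ.filter fun x => (swap a b * σ) x = x).card + 1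
      = Multiset.card σ.cycleType + (univ.filter fun x => σ x = x).card := by
  have hfs := fixfilter σ hab ha
  have hamem : a ∈ univ.filter fun x => σ x = x := by simp [ha]
  by_cases hb : σ b = b
  · have hdisj : Perm.Disjoint (swap a b) σ := fun x => by
      rcases eq_or_ne x a with rfl | hxa
      · exact Or.inr ha
      rcases eq_or_ne x b with rfl | hxb
      · exact Or.inr hb
      · exact Or.inl (swap_apply_of_ne_of_ne hxa hxb)
    have h1 : Multiset.card (swap a b * σ).cycleType = 1 + Multiset.card σ.cycleType := by
      rw [Equiv.Perm.Disjoint.cycleType_mul hdisj, Multiset.card_add, (isCycle_swap hab).cycleType]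
      simp
    have hsub : ({a, b} : Finset α) ⊆ univ.filter (fun x => σ x = x) := by
      intro x hx
      rcases Finset.mem_insert.mp hx with rfl | hx
      · exact hamem
      · rw [Finset.mem_singleton.mp hx]; simp [hb]
    have h2 := Finset.card_sdiff_add_card_eq_card hsub
    rw [Finset.card_pair hab] at h2
    rw [hfs, h1]
    omega
  · set c := σ.cycleOf b with hcdef
    have hca : c a = a := by
      rw [hcdef, cycleOf_apply]; split <;> simp [ha]
    have hcb : c b ≠ b := by rw [hcdef, cycleOf_apply_self]; exact hb
    have hcmem : c ∈ σ.cycleFactorsFinset :=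
      cycleOf_mem_cycleFactorsFinset_iff.mpr (mem_support.mpr hb)
    set τ := σ * c⁻¹ with hτdef
    have hτc : Perm.Disjoint τ c := disjoint_mul_inv_of_mem_cycleFactorsFinset hcmem
    have hτfac : τ.cycleFactorsFinset = σ.cycleFactorsFinset \ {c} :=
      cycleFactorsFinset_mul_inv_mem_eq_sdiff hcmem
    have hd : IsCycle (swap a b * c) := keyCycle hab ha hb
    have hτa : τ a = a := by
      have : c⁻¹ a = a := by rw [Equiv.Perm.inv_eq_iff_eq]; exact hca.symm
      rw [hτdef, mul_apply, this, ha]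
    have hτb : τ b = b := (hτc b).resolve_right hcb
    have hτswap : Perm.Disjoint (swap a b) τ := fun x => by
      rcases eq_or_ne x a with rfl | hxa
      · exact Or.inr hτa
      rcases eq_or_ne x b with rfl | hxb
      · exact Or.inr hτb
      · exact Or.inl (swap_apply_of_ne_of_ne hxa hxb)
    have hσ : σ = τ * c := by rw [hτdef, inv_mul_cancel_right]
    have heq : swap a b * σ = τ * (swap a b * c) := by
      rw [show τ * (swap a b * c) = τ * swap a b * c from (mul_assoc _ _ _).symm,
        ← hτswap.commute.eq, mul_assoc, ← hσ]
    have hdisj2 : Perm.Disjoint τ (swap a b * c) := fun x => by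
      by_cases hx : (swap a b * c) x = x
      · exact Or.inr hx
      · left
        rcases eq_or_ne x a with rfl | hxa
        · exact hτa
        rcases eq_or_ne x b with rfl | hxb
        · exact hτb
        have hcx : c x ≠ x := fun h =>
          hx (by rw [mul_apply, h, swap_apply_of_ne_of_ne hxa hxb])
        exact (hτc x).resolve_right hcx
    have hfac : (swap a b * σ).cycleFactorsFinset
        = τ.cycleFactorsFinset ∪ {swap a b * c} := by
      rw [heq, hdisj2.cycleFactorsFinset_mul_eq_union, hd.cycleFactorsFinset_eq_singleton]
    have hdnotmem : (swap a b * c) ∉ τ.cycleFactorsFinset := by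
      intro hmem
      have haa : a ∈ (swap a b * c).support := by
        rw [mem_support, mul_apply, hca, swap_apply_left]
        exact hab.symm
      exact (mem_support.mp (mem_cycleFactorsFinset_support_le hmem haa)) hτa
    have hc1 : (swap a b * σ).cycleFactorsFinset.card = τ.cycleFactorsFinset.card + 1 := by
      rw [hfac, Finset.card_union_of_disjoint (Finset.disjoint_singleton_right.mpr hdnotmem),
        Finset.card_singleton]
    have hc2 : τ.cycleFactorsFinset.card + 1 = σ.cycleFactorsFinset.card := by
      rw [hτfac, ← Finset.erase_eq]
      exact Finset.card_erase_add_one hcmem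
    have hbnot : b ∉ univ.filter (fun x => σ x = x) := by simp [hb]
    have hsd : (univ.filter fun x => σ x = x) \ {a, b}
        = (univ.filter fun x => σ x = x).erase a := by
      rw [Finset.erase_eq]
      ext x
      simp only [mem_sdiff, mem_insert, mem_singleton]
      constructor
      · rintro ⟨h1, h2⟩; exact ⟨h1, fun h => h2 (Or.inl h)⟩
      · rintro ⟨h1, h2⟩
        refine ⟨h1, fun h => ?_⟩
        rcases h with h | h
        · exact h2 h
        · subst h; exact hbnot h1
    have hfx : (univ.filter fun x => (swap a b * σ) x = x).card + 1
        = (univ.filter fun x => σ x = x).card := by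
      rw [hfs, hsd]
      exact Finset.card_erase_add_one hamem
    rw [cardTfac, cardTfac, hc1]
    omega

open Equiv.Perm in
lemma ehat_apply_succ {M : ℕ} (e : Perm (Fin M)) (x : Fin M) :
    decomposeFin.symm (0, e) x.succ = (e x).succ := by
  rw [decomposeFin_symm_apply_succ, swap_self]
  rfl

def succEquiv (M : ℕ) : Fin M ≃ {x : Fin (M + 1) // x ≠ 0} where
  toFun i := ⟨i.succ, i.succ_ne_zero⟩
  invFun x := x.1.pred x.2
  left_inv i := by simp
  right_inv x := by simp

open Equiv.Perm in
lemma ehat_eq_extendDomain {M : ℕ} (e : Perm (Fin M)) :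
    decomposeFin.symm (0, e) = e.extendDomain (succEquiv M) := by
  apply Equiv.ext
  intro x
  refine Fin.cases ?_ (fun i => ?_) x
  · rw [decomposeFin_symm_apply_zero]
    exact (Perm.extendDomain_apply_not_subtype e (succEquiv M) (by simp)).symm
  · rw [ehat_apply_succ]
    have := Perm.extendDomain_apply_subtype e (succEquiv M) (b := i.succ) i.succ_ne_zero
    rw [this]
    congr 1

open Equiv.Perm in
lemma cyc_ehat {M : ℕ} (e : Perm (Fin M)) :
    Multiset.card (decomposeFin.symm (0, e) : Perm (Fin (M + 1))).cycleType
        + (univ.filter fun x => decomposeFin.symm (0, e) x = x).card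
      = Multiset.card e.cycleType + (univ.filter fun i => e i = i).card + 1 := by
  have h1 : Multiset.card (decomposeFin.symm (0, e) : Perm (Fin (M + 1))).cycleType
      = Multiset.card e.cycleType := by
    rw [ehat_eq_extendDomain, cycleType_extendDomain]
  have h2 : (univ.filter fun x => decomposeFin.symm (0, e) x = x).card
      = (univ.filter fun i => e i = i).card + 1 := by
    rw [Finset.card_filter, Finset.card_filter, Fin.sum_univ_succ]
    rw [decomposeFin_symm_apply_zero]
    simp only [if_pos rfl]
    have : ∀ i : Fin M, (if decomposeFin.symm (0, e) i.succ = i.succ then 1 else 0)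
        = (if e i = i then 1 else 0) := by
      intro i
      rw [ehat_apply_succ]
      simp [Fin.succ_inj]
    simp only [this, if_true]
    omega
  omega

open Equiv.Perm in
lemma cyc_decomposeFin {M : ℕ} (p : Fin (M + 1)) (e : Perm (Fin M)) :
    Multiset.card (decomposeFin.symm (p, e) : Perm (Fin (M + 1))).cycleType
        + (univ.filter fun x => decomposeFin.symm (p, e) x = x).card
      = Multiset.card e.cycleType + (univ.filter fun i => e i = i).card
        + (if p = 0 then 1 else 0) := by
  rcases eq_or_ne p 0 with rfl | hp
  · rw [if_pos rfl]; exact cyc_ehat e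
  · rw [if_neg hp]
    have heq : (decomposeFin.symm (p, e) : Perm (Fin (M + 1)))
        = swap 0 p * decomposeFin.symm (0, e) := by
      ext x
      refine Fin.cases ?_ (fun i => ?_) x
      · rw [decomposeFin_symm_apply_zero, mul_apply, decomposeFin_symm_apply_zero,
          swap_apply_left]
      · rw [decomposeFin_symm_apply_succ, mul_apply, ehat_apply_succ]
    have hkey := cyc_swap_mul (decomposeFin.symm (0, e) : Perm (Fin (M + 1)))
      (a := 0) (b := p) hp.symm (decomposeFin_symm_apply_zero 0 e)
    have hA := cyc_ehat e
    rw [heq]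
    omega

open Equiv.Perm in
lemma Rrec (M C : ℕ) :
    ((univ : Finset (Perm (Fin (M + 1)))).filter fun σ =>
        Multiset.card σ.cycleType + (univ.filter fun x => σ x = x).card = C).card
      = ((univ : Finset (Perm (Fin M))).filter fun e =>
          Multiset.card e.cycleType + (univ.filter fun i => e i = i).card + 1 = C).card
        + M * ((univ : Finset (Perm (Fin M))).filter fun e =>
            Multiset.card e.cycleType + (univ.filter fun i => e i = i).card = C).card := by
  rw [Finset.univ_perm_fin_succ, Finset.filter_map, Finset.card_map]
  rw [Finset.card_filter]
  rw [Fintype.sum_prod_type]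
  have key : ∀ (p : Fin (M + 1)) (e : Perm (Fin M)),
      (if Multiset.card (decomposeFin.symm (p, e) : Perm (Fin (M + 1))).cycleType
          + (univ.filter fun x => decomposeFin.symm (p, e) x = x).card = C then 1 else 0)
        = (if Multiset.card e.cycleType + (univ.filter fun i => e i = i).card
            + (if p = 0 then 1 else 0) = C then 1 else 0) := by
    intro p e
    rw [cyc_decomposeFin]
  calc (∑ p : Fin (M + 1), ∑ e : Perm (Fin M),
        if Multiset.card (decomposeFin.symm (p, e) : Perm (Fin (M + 1))).cycleType
          + (univ.filter fun x => decomposeFin.symm (p, e) x = x).card = C then 1 else 0)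
      = ∑ p : Fin (M + 1), ∑ e : Perm (Fin M),
          (if Multiset.card e.cycleType + (univ.filter fun i => e i = i).card
            + (if p = 0 then 1 else 0) = C then 1 else 0) := by
        refine Finset.sum_congr rfl fun p _ => Finset.sum_congr rfl fun e _ => key p e
    _ = _ := by
        rw [Fin.sum_univ_succ]
        simp only [if_pos rfl, Fin.succ_ne_zero, if_false, if_true, add_zero]
        rw [Finset.sum_const, ← Finset.card_filter, smul_eq_mul, Finset.card_univ,
          Fintype.card_fin]
        congr 1
        rw [← Finset.card_filter]

lemma fixcard_succ {M : ℕ} (f : Fin (M + 1) → Fin (M + 1)) (g : Fin M → Fin M)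
    (h : ∀ i, f i.succ = (g i).succ) :
    (univ.filter fun i => f i = i).card
      = (univ.filter fun i => g i = i).card + (if f 0 = 0 then 1 else 0) := by
  rw [Finset.card_filter, Finset.card_filter, Fin.sum_univ_succ]
  have : ∀ i : Fin M, (if f i.succ = i.succ then 1 else 0) = (if g i = i then 1 else 0) := by
    intro i
    rw [h i]
    simp [Fin.succ_inj]
  simp only [this]
  omega

lemma Lrec (M C : ℕ) :
    ((univ : Finset (Fin (M + 1) → Fin (M + 1))).filter fun f =>
        (∀ i, i ≤ f i) ∧ (univ.filter fun i => f i = i).card = C).card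
      = ((univ : Finset (Fin M → Fin M)).filter fun g =>
          (∀ i, i ≤ g i) ∧ (univ.filter fun i => g i = i).card + 1 = C).card
        + M * ((univ : Finset (Fin M → Fin M)).filter fun g =>
            (∀ i, i ≤ g i) ∧ (univ.filter fun i => g i = i).card = C).card := by
  have step1 : ((univ : Finset (Fin (M + 1) → Fin (M + 1))).filter fun f =>
        (∀ i, i ≤ f i) ∧ (univ.filter fun i => f i = i).card = C).card
      = ((univ : Finset (Fin (M + 1) × (Fin M → Fin M))).filter fun p =>
          (∀ i, i ≤ p.2 i) ∧
            (univ.filter fun i => p.2 i = i).card + (if p.1 = 0 then 1 else 0) = C).card := by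
    refine Finset.card_bij'
      (fun f _ => (f 0, fun j => if h : f j.succ = 0 then j else (f j.succ).pred h))
      (fun p _ => Fin.cases p.1 (fun i => (p.2 i).succ)) ?_ ?_ ?_ ?_
    · -- maps into target
      intro f hf
      rw [Finset.mem_filter] at hf
      obtain ⟨-, hrc, hfix⟩ := hf
      have hne : ∀ j : Fin M, f j.succ ≠ 0 := fun j h0 =>
        (Fin.succ_ne_zero j) (le_antisymm (h0 ▸ hrc j.succ) (Fin.zero_le _))
      have hval : ∀ j : Fin M,
          (if h : f j.succ = 0 then j else (f j.succ).pred h) = (f j.succ).pred (hne j) := by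
        intro j; rw [dif_neg (hne j)]
      rw [Finset.mem_filter]
      refine ⟨Finset.mem_univ _, fun j => ?_, ?_⟩
      · dsimp only
        rw [hval j]
        have := hrc j.succ
        rw [show f j.succ = ((f j.succ).pred (hne j)).succ from (Fin.succ_pred _ _).symm]
          at this
        exact Fin.succ_le_succ_iff.mp this
      · dsimp only
        simp only [hval]
        rw [← fixcard_succ f _ (fun j => (Fin.succ_pred _ _).symm)]
        exact hfix
    · -- reverse maps into source
      rintro ⟨a, g⟩ hp
      dsimp only
      rw [Finset.mem_filter] at hp
      obtain ⟨-, hrc, hfix⟩ := hp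
      rw [Finset.mem_filter]
      refine ⟨Finset.mem_univ _, fun i => ?_, ?_⟩
      · refine Fin.cases ?_ (fun j => ?_) i
        · exact Fin.zero_le _
        · simp only [Fin.cases_succ]
          exact Fin.succ_le_succ_iff.mpr (hrc j)
      · rw [fixcard_succ _ g (fun j => by simp only [Fin.cases_succ])]
        simp only [Fin.cases_zero]
        convert hfix
        rfl
    · -- left inverse
      intro f hf
      dsimp only
      rw [Finset.mem_filter] at hf
      obtain ⟨-, hrc, -⟩ := hf
      have hne : ∀ j : Fin M, f j.succ ≠ 0 := fun j h0 =>
        (Fin.succ_ne_zero j) (le_antisymm (h0 ▸ hrc j.succ) (Fin.zero_le _))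
      funext x
      refine Fin.cases ?_ (fun j => ?_) x
      · simp only [Fin.cases_zero]
      · simp only [Fin.cases_succ, dif_neg (hne _), Fin.succ_pred]
    · -- right inverse
      rintro ⟨a, g⟩ hp
      dsimp only
      refine Prod.ext ?_ ?_
      · simp only [Fin.cases_zero]
      · funext j
        simp only [Fin.cases_succ, Fin.succ_ne_zero, dite_false, Fin.pred_succ]
  rw [step1, Finset.card_filter, Fintype.sum_prod_type, Fin.sum_univ_succ]
  simp only [if_pos rfl, Fin.succ_ne_zero, if_false, if_true, add_zero]
  simp only [← Finset.card_filter]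
  congr 1
  refine (Finset.sum_const (b := #(filter (fun g : Fin M → Fin M =>
      (∀ i, i ≤ g i) ∧ #(filter (fun i => g i = i) univ) = C) univ))).trans ?_
  rw [smul_eq_mul, Finset.card_univ, Fintype.card_fin]

open Equiv.Perm in
lemma mainCount (M C : ℕ) :
    ((univ : Finset (Fin M → Fin M)).filter fun f =>
        (∀ i, i ≤ f i) ∧ (univ.filter fun i => f i = i).card = C).card
      = ((univ : Finset (Perm (Fin M))).filter fun σ =>
          Multiset.card σ.cycleType + (univ.filter fun x => σ x = x).card = C).card := by
  induction M generalizing C with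
  | zero =>
    have hperm : ∀ σ : Perm (Fin 0), σ = 1 := fun σ => Equiv.ext fun x => x.elim0
    cases C with
    | zero =>
      rw [Finset.filter_true_of_mem, Finset.filter_true_of_mem, Finset.card_univ,
        Finset.card_univ]
      · simp [Fintype.card_perm]
      · intro σ _
        rw [hperm σ]
        simp
      · intro f _
        exact ⟨fun i => i.elim0, by simp⟩
    | succ c =>
      rw [Finset.filter_false_of_mem, Finset.filter_false_of_mem, Finset.card_empty,
        Finset.card_empty]
      · intro σ _
        rw [hperm σ]
        simp
      · intro f _
        simp
  | succ M ih =>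
    rw [Lrec, Rrec]
    cases C with
    | zero =>
      have hL : ((univ : Finset (Fin M → Fin M)).filter fun g =>
          (∀ i, i ≤ g i) ∧ (univ.filter fun i => g i = i).card + 1 = 0) = ∅ :=
        Finset.filter_false_of_mem (fun g _ h => by omega)
      have hR : ((univ : Finset (Perm (Fin M))).filter fun e =>
          Multiset.card e.cycleType + (univ.filter fun i => e i = i).card + 1 = 0) = ∅ :=
        Finset.filter_false_of_mem (fun e _ h => by omega)
      rw [hL, hR, ih 0]
      rfl
    | succ c =>
      simp only [add_left_inj]
      rw [ih c, ih (c + 1)]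

/-- The number of ranking-compatible maps `f : Fin M → Fin M` (i.e. `i ≤ f i`
for all `i`) with exactly `C` fixed points equals the number of permutations of
`Fin M` with exactly `C` cycles (fixed points counted as cycles), i.e. the
unsigned Stirling number of the first kind. -/
theorem stmt14 (M C : ℕ) (hM : 1 ≤ M) (hC : 1 ≤ C) (hCM : C ≤ M) :
    (Finset.univ.filter (fun f : Fin M → Fin M =>
        (∀ i : Fin M, i ≤ f i) ∧
        (Finset.univ.filter (fun i : Fin M => f i = i)).card = C)).card
      = (Finset.univ.filter (fun σ : Equiv.Perm (Fin M) =>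
          σ.cycleType.card +
            (Finset.univ.filter (fun x : Fin M => σ x = x)).card = C)).card := by
  exact mainCount M C
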